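/- (Corollary 3, case m = 4.) Let n₀, n₁ be positive integers with gcd(n₀, n₁) = 1, and suppose n₁ is a prime with n₁ ≡ 1 (mod 4). Then equation (2) with m = 4 has no integer polynomial solution, i.e. there are no polynomials x, y, z ∈ ℤ[λ] with positive values on the natural numbers satisfying 4/(n₀ + n₁·t) = 1/x(t) + 1/y(t) + 1/z(t) for every natural number t. -/

import Mathlib

open Polynomial Filter

/-- A polynomial with positive values at naturals has positive leading coefficient. -/
private lemma lc_pos {p : Polynomial ℤ} (hp : ∀ t : ℕ, 0 < p.eval (t : ℤ)) :
    0 < p.leadingCoeff := by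
  have hp0 : p ≠ 0 := by
    intro h
    simpa [h] using hp 0
  rcases Nat.eq_zero_or_pos p.natDegree with h0 | hdpos
  · have : p.leadingCoeff = p.eval 0 := by
      rw [Polynomial.leadingCoeff, h0, Polynomial.coeff_zero_eq_eval_zero]
    rw [this]
    simpa using hp 0
  · by_contra hle
    push_neg at hle
    have hlt : p.leadingCoeff < 0 :=
      lt_of_le_of_ne hle (Polynomial.leadingCoeff_ne_zero.mpr hp0)
    set P : Polynomial ℝ := p.map (Int.castRingHom ℝ) with hP
    have hinj : Function.Injective (Int.castRingHom ℝ) := Int.cast_injective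
    have hPlc : P.leadingCoeff = (p.leadingCoeff : ℝ) :=
      Polynomial.leadingCoeff_map_of_injective hinj p
    have hPdeg : 0 < P.degree := by
      rw [hP, Polynomial.degree_map_eq_of_injective hinj]
      exact Polynomial.natDegree_pos_iff_degree_pos.mp hdpos
    have htd : Tendsto (fun x : ℝ => P.eval x) atTop atBot :=
      P.tendsto_atBot_of_leadingCoeff_nonpos hPdeg (by rw [hPlc]; exact_mod_cast hlt.le)
    have htd2 : Tendsto (fun t : ℕ => P.eval (t : ℝ)) atTop atBot :=
      htd.comp tendsto_natCast_atTop_atTop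
    obtain ⟨t, ht⟩ := (htd2.eventually (eventually_lt_atBot (0 : ℝ))).exists
    have hcast : P.eval (t : ℝ) = ((p.eval (t : ℤ) : ℤ) : ℝ) := by
      rw [hP, Polynomial.eval_map, Polynomial.eval₂_at_natCast]
      norm_num
    rw [hcast] at ht
    exact absurd (by exact_mod_cast ht) (not_lt.mpr (hp t).le)

private lemma two_frac_aux (p b c : ℤ) (hp : Prime p) (hppos : 0 < p) (hmod : p % 4 = 1)
    (hb : 0 < b) (hc : 0 < c) (h : 4 * b * c = p * (b + c)) (hpb : p ∣ b) : False := by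
  obtain ⟨b', rfl⟩ := hpb
  have hb' : 0 < b' := by
    by_contra hb'
    push_neg at hb'
    nlinarith
  have h2 : p * (4 * b' * c) = p * (p * b' + c) := by linear_combination h
  have h3 : 4 * b' * c = p * b' + c := mul_left_cancel₀ hppos.ne' h2
  have hcop : IsCoprime (4 * b' - 1) b' := ⟨-1, 4, by ring⟩
  have hdvd : (4 * b' - 1) ∣ p * b' := ⟨c, by linarith⟩
  obtain ⟨e, he⟩ := hcop.dvd_of_dvd_mul_right hdvd
  rcases hp.irreducible.isUnit_or_isUnit he with hu | hu
  · rw [Int.isUnit_iff] at hu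
    omega
  · rw [Int.isUnit_iff] at hu
    rcases hu with rfl | rfl
    · rw [mul_one] at he
      omega
    · rw [mul_neg_one] at he
      omega

/-- `4/p = 1/b + 1/c` is impossible for a prime `p ≡ 1 (mod 4)`. -/
private lemma two_frac (p b c : ℤ) (hp : Prime p) (hppos : 0 < p) (hmod : p % 4 = 1)
    (hb : 0 < b) (hc : 0 < c) (h : 4 * b * c = p * (b + c)) : False := by
  have hdvd : p ∣ 4 * (b * c) := ⟨b + c, by linarith⟩
  rcases (hp.dvd_mul).mp hdvd with h4 | hbc
  · have hle := Int.le_of_dvd (by norm_num) h4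
    have h1 := hp.ne_one
    omega
  · rcases (hp.dvd_mul).mp hbc with hb' | hc'
    · exact two_frac_aux p b c hp hppos hmod hb hc h hb'
    · exact two_frac_aux p c b hp hppos hmod hc hb (by linarith) hc'

private lemma linear_eq_of_root {n₀ n₁ : ℤ} (hn₁ : 0 < n₁) (hcop : Int.gcd n₀ n₁ = 1)
    {p : Polynomial ℤ} (hdeg : p.natDegree ≤ 1) (hlc : 0 < p.coeff 1)
    (hroot : Polynomial.aeval (-(n₀ : ℚ)/(n₁ : ℚ)) p = 0) :
    ∃ c : ℤ, 0 < c ∧ p = C c * (C n₀ + C n₁ * X) := by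
  have hform := Polynomial.eq_X_add_C_of_natDegree_le_one hdeg
  have hn₁Q : (n₁ : ℚ) ≠ 0 := by exact_mod_cast hn₁.ne'
  rw [hform] at hroot
  simp only [map_add, map_mul, Polynomial.aeval_C, Polynomial.aeval_X,
    algebraMap_int_eq, eq_intCast, map_intCast] at hroot
  have hQ : (p.coeff 0 : ℚ) * n₁ = (p.coeff 1 : ℚ) * n₀ := by
    field_simp at hroot
    linarith
  have hZ : p.coeff 0 * n₁ = p.coeff 1 * n₀ := by exact_mod_cast hQ
  have hcop' : IsCoprime (n₁ : ℤ) n₀ := by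
    rw [Int.isCoprime_iff_gcd_eq_one, Int.gcd_comm]
    exact hcop
  have hdvd : n₁ ∣ p.coeff 1 * n₀ := ⟨p.coeff 0, by linarith⟩
  obtain ⟨c, hc⟩ := hcop'.dvd_of_dvd_mul_right hdvd
  have hc0 : 0 < c := by nlinarith
  have hp0 : p.coeff 0 = c * n₀ := by
    have h2 : p.coeff 0 * n₁ = (c * n₀) * n₁ := by rw [hZ, hc]; ring
    exact mul_right_cancel₀ hn₁.ne' h2
  refine ⟨c, hc0, ?_⟩
  rw [hform, hp0, hc]
  simp only [map_mul]
  ring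


private lemma nn_natDegree {n₀ n₁ : ℤ} (hn₁ : 0 < n₁) :
    (C n₀ + C n₁ * X : Polynomial ℤ).natDegree = 1 := by
  rw [add_comm]
  exact Polynomial.natDegree_linear hn₁.ne'

private lemma nn_ne_zero {n₀ n₁ : ℤ} (hn₁ : 0 < n₁) : (C n₀ + C n₁ * X : Polynomial ℤ) ≠ 0 := by
  intro h
  have h2 := nn_natDegree (n₀ := n₀) hn₁
  rw [h] at h2
  simp at h2

private lemma aeval_nn {n₀ n₁ : ℤ} (hn₁ : 0 < n₁) :
    Polynomial.aeval (-(n₀ : ℚ)/(n₁ : ℚ)) (C n₀ + C n₁ * X : Polynomial ℤ) = 0 := by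
  have hn₁Q : (n₁ : ℚ) ≠ 0 := by exact_mod_cast hn₁.ne'
  simp only [map_add, map_mul, Polynomial.aeval_C, Polynomial.aeval_X,
    algebraMap_int_eq, eq_intCast, map_intCast]
  field_simp
  ring

private lemma key (n₀ n₁ : ℤ) (hn₀ : 0 < n₀) (hn₁ : 0 < n₁) (hcop : Int.gcd n₀ n₁ = 1)
    (c : ℤ) (hc : 0 < c) (u v : Polynomial ℤ)
    (hu1 : u.natDegree ≤ 1) (hv1 : v.natDegree ≤ 1)
    (hcu : 0 < u.coeff 1) (hcv : 0 < v.coeff 1)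
    (h3 : C 4 * C c * (u * v) = u * v + C c * ((C n₀ + C n₁ * X) * (u + v)))
    (hEu : Polynomial.aeval (-(n₀ : ℚ)/(n₁ : ℚ)) u = 0) : False := by
  obtain ⟨a, ha, hu⟩ := linear_eq_of_root hn₁ hcop hu1 hcu hEu
  rw [hu] at h3
  have h4 : (C n₀ + C n₁ * X) * (C 4 * C c * (C a * v)) =
      (C n₀ + C n₁ * X) * (C a * v + C c * (C a * (C n₀ + C n₁ * X)) + C c * v) := by
    linear_combination h3
  have h5 := mul_left_cancel₀ (nn_ne_zero hn₁) h4
  set q : ℚ := -(n₀ : ℚ)/(n₁ : ℚ) with hqdef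
  have hn₁Q : (n₁ : ℚ) ≠ 0 := by exact_mod_cast hn₁.ne'
  have hq : (n₀ : ℚ) + (n₁ : ℚ) * q = 0 := by
    rw [hqdef]
    field_simp
    ring
  have h6 := congrArg (Polynomial.aeval q) h5
  simp only [map_add, map_mul, map_intCast, Polynomial.aeval_C, Polynomial.aeval_X,
    algebraMap_int_eq, eq_intCast] at h6
  have h6' : (Polynomial.aeval q v) * (4 * (c : ℚ) * a - a - c) = 0 := by
    push_cast at h6 ⊢
    linear_combination h6 + (c : ℚ) * (a : ℚ) * hq
  have hK : (2 : ℤ) ≤ 4 * c * a - a - c := by nlinarith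
  have hKQ : (4 : ℚ) * c * a - a - c ≠ 0 := by
    have h2 : (2 : ℚ) ≤ 4 * c * a - a - c := by exact_mod_cast hK
    linarith
  have hEv0 : Polynomial.aeval q v = 0 := by
    rcases mul_eq_zero.mp h6' with h | h
    · exact h
    · exact absurd h hKQ
  obtain ⟨b, hb, hv⟩ := linear_eq_of_root hn₁ hcop hv1 hcv hEv0
  have h7 := congrArg (Polynomial.eval (0 : ℤ)) h5
  rw [hv] at h7
  simp only [Polynomial.eval_add, Polynomial.eval_mul, Polynomial.eval_C, Polynomial.eval_X,
    mul_zero, add_zero] at h7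
  -- h7 : 4 * c * (a * (b * n₀)) = a * (b * n₀) + c * (a * n₀) + c * (b * n₀)
  have h8 : (4 * c * (a * b)) * n₀ = (a * b + c * a + c * b) * n₀ := by linear_combination h7
  have h9 : 4 * c * (a * b) = a * b + c * a + c * b := mul_right_cancel₀ hn₀.ne' h8
  nlinarith [mul_nonneg (mul_nonneg (by linarith : (0:ℤ) ≤ c - 1) ha.le) hb.le,
    mul_nonneg (mul_nonneg (by linarith : (0:ℤ) ≤ b - 1) hc.le) ha.le,
    mul_nonneg (mul_nonneg (by linarith : (0:ℤ) ≤ a - 1) hc.le) hb.le,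
    mul_pos (mul_pos hc ha) hb]

private lemma caseA (n₀ n₁ : ℤ) (hn₀ : 0 < n₀) (hn₁ : 0 < n₁) (hcop : Int.gcd n₀ n₁ = 1)
    (x y z : Polynomial ℤ)
    (hx1 : x.natDegree ≤ 1) (hy1 : y.natDegree ≤ 1)
    (hcx : 0 < x.coeff 1) (hcy : 0 < y.coeff 1) (hcz : 0 < z.coeff 1)
    (hz1 : z.natDegree ≤ 1)
    (heq : C 4 * (x * y * z) = (C n₀ + C n₁ * X) * (x * y + x * z + y * z))
    (hEz : Polynomial.aeval (-(n₀ : ℚ)/(n₁ : ℚ)) z = 0) : False := by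
  obtain ⟨c, hcpos, hzeq⟩ := linear_eq_of_root hn₁ hcop hz1 hcz hEz
  rw [hzeq] at heq
  have h4 : (C n₀ + C n₁ * X) * (C 4 * C c * (x * y)) =
      (C n₀ + C n₁ * X) * (x * y + C c * ((C n₀ + C n₁ * X) * (x + y))) := by
    linear_combination heq
  have h3 := mul_left_cancel₀ (nn_ne_zero hn₁) h4
  set q : ℚ := -(n₀ : ℚ)/(n₁ : ℚ) with hqdef
  have hn₁Q : (n₁ : ℚ) ≠ 0 := by exact_mod_cast hn₁.ne'
  have hq : (n₀ : ℚ) + (n₁ : ℚ) * q = 0 := by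
    rw [hqdef]
    field_simp
    ring
  have hE3 := congrArg (Polynomial.aeval q) h3
  simp only [map_add, map_mul, map_intCast, Polynomial.aeval_C, Polynomial.aeval_X,
    algebraMap_int_eq, eq_intCast] at hE3
  have hxy0 : (Polynomial.aeval q x) * (Polynomial.aeval q y) * (4 * (c : ℚ) - 1) = 0 := by
    push_cast at hE3 ⊢
    linear_combination hE3 + (c : ℚ) * ((Polynomial.aeval q x) + (Polynomial.aeval q y)) * hq
  have hc1 : (4 : ℚ) * c - 1 ≠ 0 := by
    have : (3 : ℚ) ≤ 4 * c - 1 := by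
      have : (1 : ℤ) ≤ c := hcpos
      have hcQ : (1 : ℚ) ≤ (c : ℚ) := by exact_mod_cast this
      linarith
    linarith
  rcases mul_eq_zero.mp hxy0 with h | h
  · rcases mul_eq_zero.mp h with hEx | hEy
    · exact key n₀ n₁ hn₀ hn₁ hcop c hcpos x y hx1 hy1 hcx hcy h3 hEx
    · exact key n₀ n₁ hn₀ hn₁ hcop c hcpos y x hy1 hx1 hcy hcx (by linear_combination h3) hEy
  · exact absurd h hc1

/-- `x, y, z ∈ ℤ[λ]` form an integer polynomial solution of equation (2). -/
def IsIntPolySolution (m n₀ n₁ : ℤ) (x y z : Polynomial ℤ) : Prop :=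
  (∀ t : ℕ, 0 < x.eval (t : ℤ)) ∧ (∀ t : ℕ, 0 < y.eval (t : ℤ)) ∧
  (∀ t : ℕ, 0 < z.eval (t : ℤ)) ∧
  C m * (x * y * z) = (C n₀ + C n₁ * X) * (x * y + x * z + y * z)

private lemma sol_swap12 {m n₀ n₁ : ℤ} {x y z : Polynomial ℤ}
    (h : IsIntPolySolution m n₀ n₁ x y z) : IsIntPolySolution m n₀ n₁ y x z := by
  obtain ⟨h1, h2, h3, h4⟩ := h
  exact ⟨h2, h1, h3, by linear_combination h4⟩

private lemma sol_swap23 {m n₀ n₁ : ℤ} {x y z : Polynomial ℤ}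
    (h : IsIntPolySolution m n₀ n₁ x y z) : IsIntPolySolution m n₀ n₁ x z y := by
  obtain ⟨h1, h2, h3, h4⟩ := h
  exact ⟨h1, h3, h2, by linear_combination h4⟩

private lemma core (n₀ n₁ : ℤ) (hn₀ : 0 < n₀) (hn₁ : 0 < n₁)
    (hcop : Int.gcd n₀ n₁ = 1) (hprime : Prime n₁) (hmod : n₁ % 4 = 1)
    (x y z : Polynomial ℤ) (h : IsIntPolySolution 4 n₀ n₁ x y z)
    (hzy : z.natDegree ≤ y.natDegree) (hyx : y.natDegree ≤ x.natDegree) : False := by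
  obtain ⟨hx, hy, hz, heq⟩ := h
  have hx0 : x ≠ 0 := fun h => by simpa [h] using hx 0
  have hy0 : y ≠ 0 := fun h => by simpa [h] using hy 0
  have hz0 : z ≠ 0 := fun h => by simpa [h] using hz 0
  have hlcx := lc_pos hx
  have hlcy := lc_pos hy
  have hlcz := lc_pos hz
  set dx := x.natDegree with hdx
  set dy := y.natDegree with hdy
  set dz := z.natDegree with hdzdef
  set s : Polynomial ℤ := x * y + x * z + y * z with hs
  have hxyc : (x * y).coeff (dx + dy) = x.leadingCoeff * y.leadingCoeff :=
    Polynomial.coeff_mul_degree_add_degree x y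
  have hxzc : (x * z).coeff (dx + dy) =
      if dz = dy then x.leadingCoeff * z.leadingCoeff else 0 := by
    rcases eq_or_lt_of_le hzy with h1 | h1
    · rw [if_pos h1, ← h1]
      exact Polynomial.coeff_mul_degree_add_degree x z
    · rw [if_neg h1.ne]
      exact Polynomial.coeff_eq_zero_of_natDegree_lt
        (lt_of_le_of_lt (Polynomial.natDegree_mul_le) (by omega))
  have hyzc : (y * z).coeff (dx + dy) =
      if dz = dx then y.leadingCoeff * z.leadingCoeff else 0 := by
    rcases eq_or_lt_of_le (le_trans hzy hyx) with h1 | h1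
    · rw [if_pos h1]
      have h2 : dx + dy = dy + dz := by omega
      rw [h2]
      exact Polynomial.coeff_mul_degree_add_degree y z
    · rw [if_neg h1.ne]
      exact Polynomial.coeff_eq_zero_of_natDegree_lt
        (lt_of_le_of_lt (Polynomial.natDegree_mul_le) (by omega))
  have hs_coeff : 0 < s.coeff (dx + dy) := by
    rw [hs, Polynomial.coeff_add, Polynomial.coeff_add, hxyc, hxzc, hyzc]
    split_ifs <;>
      nlinarith [mul_pos hlcx hlcy, mul_pos hlcx hlcz, mul_pos hlcy hlcz]
  have hs_ndle : s.natDegree ≤ dx + dy := by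
    refine le_trans (Polynomial.natDegree_add_le _ _) (max_le
      (le_trans (Polynomial.natDegree_add_le _ _) (max_le
        Polynomial.natDegree_mul_le
        (le_trans Polynomial.natDegree_mul_le (by omega)))) ?_)
    exact le_trans Polynomial.natDegree_mul_le (by omega)
  have hs_nd : s.natDegree = dx + dy :=
    le_antisymm hs_ndle (Polynomial.le_natDegree_of_ne_zero hs_coeff.ne')
  have hs0 : s ≠ 0 := fun h => by rw [h] at hs_coeff; simp at hs_coeff
  have hdeg1 : (C (4 : ℤ) * (x * y * z)).natDegree = dx + dy + dz := by
    rw [Polynomial.natDegree_C_mul (by norm_num : (4 : ℤ) ≠ 0),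
      Polynomial.natDegree_mul (mul_ne_zero hx0 hy0) hz0, Polynomial.natDegree_mul hx0 hy0]
  have hdeg2 : ((C n₀ + C n₁ * X) * s).natDegree = 1 + (dx + dy) := by
    rw [Polynomial.natDegree_mul (nn_ne_zero hn₁) hs0, nn_natDegree hn₁, hs_nd]
  rw [heq, hdeg2] at hdeg1
  have hdz : dz = 1 := by omega
  -- leading coefficient equation at degree dx + dy + 1
  have hC1 : (C (4 : ℤ) * (x * y * z)).coeff (dx + dy + 1) =
      4 * (x.leadingCoeff * y.leadingCoeff * z.leadingCoeff) := by
    rw [Polynomial.coeff_C_mul]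
    congr 1
    have hnd : (x * y * z).natDegree = dx + dy + 1 := by
      rw [Polynomial.natDegree_mul (mul_ne_zero hx0 hy0) hz0,
        Polynomial.natDegree_mul hx0 hy0]
      omega
    rw [← hnd, Polynomial.coeff_natDegree, Polynomial.leadingCoeff_mul,
      Polynomial.leadingCoeff_mul]
  have hC2 : ((C n₀ + C n₁ * X) * s).coeff (dx + dy + 1) =
      n₀ * s.coeff (dx + dy + 1) + n₁ * s.coeff (dx + dy) := by
    rw [add_mul, Polynomial.coeff_add, Polynomial.coeff_C_mul, mul_assoc,
      Polynomial.coeff_C_mul, Polynomial.coeff_X_mul]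
  have hstop : s.coeff (dx + dy + 1) = 0 :=
    Polynomial.coeff_eq_zero_of_natDegree_lt (by omega)
  have hmain : 4 * (x.leadingCoeff * y.leadingCoeff * z.leadingCoeff) =
      n₁ * s.coeff (dx + dy) := by
    have hcc := congrArg (fun p => Polynomial.coeff p (dx + dy + 1)) heq
    rw [hC1, hC2, hstop, mul_zero, zero_add] at hcc
    exact hcc
  rcases Nat.lt_or_ge dy 2 with hdy2 | hdy2
  · have hdy1 : dy = 1 := by omega
    rcases Nat.lt_or_ge dx 2 with hdx2 | hdx2
    · -- case A : all degrees 1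
      have hdx1 : dx = 1 := by omega
      have hcx1 : 0 < x.coeff 1 := by rw [show (1 : ℕ) = dx from hdx1.symm, hdx]; exact hlcx
      have hcy1 : 0 < y.coeff 1 := by rw [show (1 : ℕ) = dy from hdy1.symm, hdy]; exact hlcy
      have hcz1 : 0 < z.coeff 1 := by rw [show (1 : ℕ) = dz from hdz.symm, hdzdef]; exact hlcz
      set q : ℚ := -(n₀ : ℚ)/(n₁ : ℚ) with hqdef
      have hprod : (Polynomial.aeval q) (4 : Polynomial ℤ) = 0 ∨ (Polynomial.aeval q) x = 0 ∨
          (Polynomial.aeval q) y = 0 ∨ (Polynomial.aeval q) z = 0 := by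
        have hE := congrArg (Polynomial.aeval q) heq
        rw [map_mul, map_mul, map_mul, map_mul (Polynomial.aeval q) (C n₀ + C n₁ * X) s,
          aeval_nn hn₁, zero_mul] at hE
        simpa [mul_assoc] using hE
      rcases hprod with h4' | hEx | hEy | hEz
      · rw [show ((4 : Polynomial ℤ)) = C 4 from rfl, Polynomial.aeval_C] at h4'
        norm_num at h4' 
      · exact caseA n₀ n₁ hn₀ hn₁ hcop y z x (by omega) (by omega) hcy1 hcz1 hcx1 (by omega)
          (by linear_combination heq) hEx
      · exact caseA n₀ n₁ hn₀ hn₁ hcop x z y (by omega) (by omega) hcx1 hcz1 hcy1 (by omega)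
          (by linear_combination heq) hEy
      · exact caseA n₀ n₁ hn₀ hn₁ hcop x y z (by omega) (by omega) hcx1 hcy1 hcz1 (by omega)
          heq hEz
    · -- case B : dx ≥ 2, dy = dz = 1
      have hscoeff : s.coeff (dx + dy) =
          x.leadingCoeff * y.leadingCoeff + x.leadingCoeff * z.leadingCoeff := by
        rw [hs, Polynomial.coeff_add, Polynomial.coeff_add, hxyc, hxzc, hyzc,
          if_pos (by omega : dz = dy), if_neg (by omega : ¬ dz = dx)]
        ring
      rw [hscoeff] at hmain
      have h2 : x.leadingCoeff * (4 * (y.leadingCoeff * z.leadingCoeff)) =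
          x.leadingCoeff * (n₁ * (y.leadingCoeff + z.leadingCoeff)) := by
        linear_combination hmain
      have h3 := mul_left_cancel₀ hlcx.ne' h2
      exact two_frac n₁ y.leadingCoeff z.leadingCoeff hprime hn₁ hmod hlcy hlcz
        (by linarith)
  · -- case C : dx ≥ dy ≥ 2, dz = 1
    have hscoeff : s.coeff (dx + dy) = x.leadingCoeff * y.leadingCoeff := by
      rw [hs, Polynomial.coeff_add, Polynomial.coeff_add, hxyc, hxzc, hyzc,
        if_neg (by omega : ¬ dz = dy), if_neg (by omega : ¬ dz = dx)]
      ring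
    rw [hscoeff] at hmain
    have h2 : (x.leadingCoeff * y.leadingCoeff) * (4 * z.leadingCoeff) =
        (x.leadingCoeff * y.leadingCoeff) * n₁ := by linear_combination hmain
    have h3 := mul_left_cancel₀ (mul_pos hlcx hlcy).ne' h2
    omega

/-- Corollary 3 for `m = 4`: a prime modulus `n₁ ≡ 1 (mod 4)` admits no
integer polynomial solution of equation (2). -/
theorem corollary3 (n₀ n₁ : ℤ) (hn₀ : 0 < n₀) (hn₁ : 0 < n₁)
    (hcop : Int.gcd n₀ n₁ = 1) (hprime : Prime n₁) (hmod : n₁ % 4 = 1) :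
    ¬ ∃ x y z : Polynomial ℤ, IsIntPolySolution 4 n₀ n₁ x y z := by
  rintro ⟨x, y, z, h⟩
  rcases le_total y.natDegree x.natDegree with h1 | h1 <;>
    rcases le_total z.natDegree y.natDegree with h2 | h2 <;>
      rcases le_total z.natDegree x.natDegree with h3 | h3
  · exact core n₀ n₁ hn₀ hn₁ hcop hprime hmod x y z h h2 h1
  · exact core n₀ n₁ hn₀ hn₁ hcop hprime hmod x y z h h2 h1
  · exact core n₀ n₁ hn₀ hn₁ hcop hprime hmod x z y (sol_swap23 h) h2 h3
  · exact core n₀ n₁ hn₀ hn₁ hcop hprime hmod z x y (sol_swap12 (sol_swap23 h)) h1 h3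
  · exact core n₀ n₁ hn₀ hn₁ hcop hprime hmod y x z (sol_swap12 h) h3 h1
  · exact core n₀ n₁ hn₀ hn₁ hcop hprime hmod y z x (sol_swap23 (sol_swap12 h)) h3 h2
  · exact core n₀ n₁ hn₀ hn₁ hcop hprime hmod z y x (sol_swap12 (sol_swap23 (sol_swap12 h))) h1 h2
  · exact core n₀ n₁ hn₀ hn₁ hcop hprime hmod z y x (sol_swap12 (sol_swap23 (sol_swap12 h))) h1 h2
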